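/- Let F be a distribution function and 0 ≤ β₁ < β₂ ≤ 1, κ > 0 be such that F(y₂) − F(y₁) ≥ κ(y₂ − y₁) whenever y₁ < y₂ and F(y₁), F(y₂−) ∈ (β₁, β₂). Then for every β ∈ (β₁, β₂) the minimal and maximal β-quantiles coincide, F^{-1}(β) = F^{-1}(β+), and for all β, β' ∈ (β₁, β₂) one has |F^{-1}(β) − F^{-1}(β')| ≤ κ^{-1} |β − β'|. -/
import Mathlib


/-- A cumulative distribution function on ℝ. -/
def IsCDF (F : ℝ → ℝ) : Prop :=
  Monotone F ∧ (∀ y, ContinuousWithinAt F (Set.Ici y) y) ∧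
    Filter.Tendsto F Filter.atBot (nhds 0) ∧ Filter.Tendsto F Filter.atTop (nhds 1)

/-- Under a local growth condition, minimal and maximal quantiles coincide and the
quantile function is Lipschitz with constant κ⁻¹ on (β₁, β₂). -/
theorem stmt7 (F : ℝ → ℝ) (hF : IsCDF F) (β₁ β₂ κ : ℝ)
    (h0 : 0 ≤ β₁) (h12 : β₁ < β₂) (h1 : β₂ ≤ 1) (hκ : 0 < κ)
    (hgrow : ∀ y₁ y₂ : ℝ, y₁ < y₂ → F y₁ ∈ Set.Ioo β₁ β₂ →
      Function.leftLim F y₂ ∈ Set.Ioo β₁ β₂ → κ * (y₂ - y₁) ≤ F y₂ - F y₁) :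
    (∀ β ∈ Set.Ioo β₁ β₂, sInf {y | β ≤ F y} = sInf {y | β < F y}) ∧
    (∀ β ∈ Set.Ioo β₁ β₂, ∀ β' ∈ Set.Ioo β₁ β₂,
      |sInf {y | β ≤ F y} - sInf {y | β' ≤ F y}| ≤ κ⁻¹ * |β - β'|) := by
  obtain ⟨hmono, hrc, hbot, htop⟩ := hF
  have hneS : ∀ β : ℝ, β < 1 → {y | β < F y}.Nonempty := fun β hβ =>
    (htop.eventually_const_lt hβ).exists
  have hneW : ∀ β : ℝ, β < 1 → {y | β ≤ F y}.Nonempty := by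
    intro β hβ
    obtain ⟨y, hy⟩ := hneS β hβ
    exact ⟨y, show β ≤ F y from le_of_lt hy⟩
  have hbdd : ∀ β : ℝ, 0 < β → BddBelow {y | β ≤ F y} := by
    intro β hβ
    obtain ⟨a, ha⟩ := Filter.eventually_atBot.mp (hbot.eventually_lt_const hβ)
    refine ⟨a, fun y hy => ?_⟩
    by_contra h
    push_neg at h
    exact absurd hy (not_le.mpr (ha y h.le))
  -- Lemma A : points strictly above the quantile satisfy β ≤ F y
  have hA : ∀ β y : ℝ, 0 < β → β < 1 → sInf {y' | β ≤ F y'} < y → β ≤ F y := by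
    intro β y hβ0 hβ1 hy
    obtain ⟨z, hz, hzy⟩ := (csInf_lt_iff (hbdd β hβ0) (hneW β hβ1)).mp hy
    exact le_trans hz (hmono hzy.le)
  -- Lemma B : points strictly below the quantile satisfy F y < β
  have hB : ∀ β y : ℝ, 0 < β → y < sInf {y' | β ≤ F y'} → F y < β := by
    intro β y hβ0 hy
    by_contra h
    push_neg at h
    exact absurd (csInf_le (hbdd β hβ0) h) (not_le.mpr hy)
  have part1 : ∀ β ∈ Set.Ioo β₁ β₂, sInf {y | β ≤ F y} = sInf {y | β < F y} := by
    rintro β ⟨hβl, hβr⟩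
    have hβ0 : 0 < β := lt_of_le_of_lt h0 hβl
    have hβ1 : β < 1 := lt_of_lt_of_le hβr h1
    have hsub : {y | β < F y} ⊆ {y | β ≤ F y} := fun y hy => show β ≤ F y from le_of_lt hy
    have hle : sInf {y | β ≤ F y} ≤ sInf {y | β < F y} :=
      csInf_le_csInf (hbdd β hβ0) (hneS β hβ1) hsub
    refine le_antisymm hle ?_
    by_contra hlt
    push_neg at hlt
    set a := sInf {y | β ≤ F y} with ha
    set b := sInf {y | β < F y} with hb
    have hub : ∀ y : ℝ, y < b → F y ≤ β := by
      intro y hy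
      by_contra h
      push_neg at h
      exact absurd (csInf_le ((hbdd β hβ0).mono hsub) h) (not_le.mpr hy)
    set y₁ := a + (b - a) / 3 with hy₁
    set y₂ := a + 2 * (b - a) / 3 with hy₂
    have h12' : y₁ < y₂ := by simp only [hy₁, hy₂]; linarith
    have hF1 : F y₁ = β :=
      le_antisymm (hub y₁ (by simp only [hy₁]; linarith))
        (hA β y₁ hβ0 hβ1 (by simp only [hy₁]; linarith))
    have hF2 : F y₂ = β :=
      le_antisymm (hub y₂ (by simp only [hy₂]; linarith))
        (hA β y₂ hβ0 hβ1 (by simp only [hy₂]; linarith))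
    have hll : Function.leftLim F y₂ = β :=
      le_antisymm ((hmono.leftLim_le le_rfl).trans hF2.le)
        (hF1 ▸ hmono.le_leftLim h12')
    have := hgrow y₁ y₂ h12' (by rw [hF1]; exact ⟨hβl, hβr⟩) (by rw [hll]; exact ⟨hβl, hβr⟩)
    rw [hF1, hF2] at this
    nlinarith
  refine ⟨part1, ?_⟩
  have key : ∀ β ∈ Set.Ioo β₁ β₂, ∀ β' ∈ Set.Ioo β₁ β₂, β ≤ β' →
      sInf {y | β' ≤ F y} - sInf {y | β ≤ F y} ≤ κ⁻¹ * (β' - β) := by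
    rintro β ⟨hβl, hβr⟩ β' ⟨hβ'l, hβ'r⟩ hββ'
    have hβ0 : 0 < β := lt_of_le_of_lt h0 hβl
    have hβ1 : β < 1 := lt_of_lt_of_le hβr h1
    have hβ'0 : 0 < β' := lt_of_le_of_lt h0 hβ'l
    have hrhs0 : 0 ≤ κ⁻¹ * (β' - β) :=
      mul_nonneg (inv_nonneg.mpr hκ.le) (sub_nonneg.mpr hββ')
    set a := sInf {y | β ≤ F y} with ha
    set b := sInf {y | β' ≤ F y} with hb
    rcases le_or_gt b a with h | h
    · linarith
    · refine le_of_forall_pos_le_add ?_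
      intro ε hε
      rcases le_or_gt (b - a) ε with h' | h'
      · linarith
      · set y₁ := a + ε / 2 with hy₁
        set y₂ := b - ε / 2 with hy₂
        have h12' : y₁ < y₂ := by simp only [hy₁, hy₂]; linarith
        have hF1β : β ≤ F y₁ := hA β y₁ hβ0 hβ1 (by simp only [hy₁]; linarith)
        have hF1β' : F y₁ < β' := hB β' y₁ hβ'0 (by simp only [hy₁]; linarith)
        have hF2β : β ≤ F y₂ := hA β y₂ hβ0 hβ1 (by simp only [hy₂]; linarith)
        have hF2β' : F y₂ < β' := hB β' y₂ hβ'0 (by simp only [hy₂]; linarith)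
        have hll1 : β₁ < Function.leftLim F y₂ :=
          lt_of_lt_of_le (lt_of_lt_of_le hβl hF1β) (hmono.le_leftLim h12')
        have hll2 : Function.leftLim F y₂ < β₂ :=
          lt_of_le_of_lt (hmono.leftLim_le le_rfl) (lt_trans hF2β' hβ'r)
        have hg := hgrow y₁ y₂ h12'
          ⟨lt_of_lt_of_le hβl hF1β, lt_trans hF1β' hβ'r⟩ ⟨hll1, hll2⟩
        have hκg : κ * (y₂ - y₁) ≤ β' - β := le_trans hg (by linarith)
        have hdiv : y₂ - y₁ ≤ κ⁻¹ * (β' - β) := by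
          rw [le_inv_mul_iff₀ hκ]
          exact hκg
        have : y₂ - y₁ = b - a - ε := by simp only [hy₁, hy₂]; ring
        linarith
  rintro β hβ β' hβ'
  have hmonoQ : ∀ γ ∈ Set.Ioo β₁ β₂, ∀ γ' ∈ Set.Ioo β₁ β₂, γ ≤ γ' →
      sInf {y | γ ≤ F y} ≤ sInf {y | γ' ≤ F y} := by
    rintro γ ⟨hγl, hγr⟩ γ' ⟨hγ'l, hγ'r⟩ hγγ'
    exact csInf_le_csInf (hbdd γ (lt_of_le_of_lt h0 hγl))
      (hneW γ' (lt_of_lt_of_le hγ'r h1)) (fun y hy => le_trans hγγ' hy)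
  rcases le_total β β' with h | h
  · rw [abs_sub_comm, abs_of_nonneg (sub_nonneg.mpr (hmonoQ β hβ β' hβ' h)),
      abs_sub_comm β β', abs_of_nonneg (sub_nonneg.mpr h)]
    exact key β hβ β' hβ' h
  · rw [abs_of_nonneg (sub_nonneg.mpr (hmonoQ β' hβ' β hβ h)),
      abs_of_nonneg (sub_nonneg.mpr h)]
    exact key β' hβ' β hβ h
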